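/- Inversion formula for the finite field Hartley transform (Theorem 2): suppose (N : K) ≠ 0 in K. If v = (v_0, …, v_{N−1}) is a vector with entries in K and V_k := ∑_{i=0}^{N−1} v_i·cas_k(i), then for every index i in {0, …, N−1}, v_i = (N : K)⁻¹ · ∑_{k=0}^{N−1} V_k·cas_k(i). -/

import Mathlib

open scoped BigOperators

/-- The finite field cosine: `cos_k(∠α^i) = (α^{ik} + α^{-ik})/2`,
where `α^{-ik}` denotes `(α⁻¹)^{ik}`. -/
noncomputable def fcos {K : Type*} [Field K] (α : Kˣ) (k i : ℤ) : K :=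
  (((α ^ (i * k) : Kˣ) : K) + ((α⁻¹ ^ (i * k) : Kˣ) : K)) / 2

/-- The finite field sine: `sin_k(∠α^i) = (α^{ik} - α^{-ik})/(2j)`. -/
noncomputable def fsin {K : Type*} [Field K] (α : Kˣ) (j : K) (k i : ℤ) : K :=
  (((α ^ (i * k) : Kˣ) : K) - ((α⁻¹ ^ (i * k) : Kˣ) : K)) / (2 * j)

/-- The finite field `cas` function: `cas_k(∠α^i) = cos_k(∠α^i) + sin_k(∠α^i)`. -/
noncomputable def fcas {K : Type*} [Field K] (α : Kˣ) (j : K) (k i : ℤ) : K :=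
  fcos α k i + fsin α j k i

/-- The finite field Hartley transform of a vector `v` indexed by `ZMod N`:
`V_k = ∑_{i=0}^{N-1} v_i · cas_k(∠α^i)`. -/
noncomputable def ffht {K : Type*} [Field K] (α : Kˣ) (j : K) {N : ℕ} [NeZero N]
    (v : ZMod N → K) (k : ZMod N) : K :=
  ∑ i : ZMod N, v i * fcas α j (k.val : ℤ) (i.val : ℤ)

/-- Theorem 2, FFHT inversion: if `(N : K) ≠ 0` and `V` is the FFHT of
`v`, then `v_i = N⁻¹ · ∑_{k=0}^{N-1} V_k · cas_k(i)`. -/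
lemma sum_zmod_eq_range {K : Type*} [AddCommMonoid K] (N : ℕ) [NeZero N] (f : ℕ → K) :
    ∑ k : ZMod N, f k.val = ∑ k ∈ Finset.range N, f k := by
  refine Finset.sum_bij' (fun k _ => k.val) (fun n _ => (n : ZMod N)) ?_ ?_ ?_ ?_ ?_
  · intro a _; exact Finset.mem_range.mpr a.val_lt
  · intro a _; exact Finset.mem_univ _
  · intro a _; exact ZMod.natCast_rightInverse a
  · intro a ha; exact ZMod.val_cast_of_lt (Finset.mem_range.mp ha)
  · intro a _; rfl

lemma geom_sum_zmod {K : Type*} [Field K] (α : Kˣ) (N : ℕ) [NeZero N]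
    (hα : orderOf α = N) (t : ℤ) :
    ∑ k : ZMod N, ((α ^ (t * (k.val : ℤ)) : Kˣ) : K) =
      if (t : ZMod N) = 0 then (N : K) else 0 := by
  have hterm : ∀ k : ℕ, ((α ^ (t * (k : ℤ)) : Kˣ) : K) = ((α ^ t : Kˣ) : K) ^ k := by
    intro k
    rw [zpow_mul, zpow_natCast, Units.val_pow_eq_pow_val]
  have hsum : ∑ k : ZMod N, ((α ^ (t * (k.val : ℤ)) : Kˣ) : K)
      = ∑ k ∈ Finset.range N, ((α ^ t : Kˣ) : K) ^ k := by
    rw [sum_zmod_eq_range N (fun k => ((α ^ (t * (k : ℤ)) : Kˣ) : K))]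
    exact Finset.sum_congr rfl fun k _ => hterm k
  rw [hsum]
  by_cases h : (t : ZMod N) = 0
  · have hdvd : (N : ℤ) ∣ t := (ZMod.intCast_zmod_eq_zero_iff_dvd t N).mp h
    have : α ^ t = 1 := by
      rw [← hα] at hdvd
      exact orderOf_dvd_iff_zpow_eq_one.mp hdvd
    simp [h, this]
  · have hne : ((α ^ t : Kˣ) : K) ≠ 1 := by
      intro hc
      apply h
      have : α ^ t = 1 := Units.ext hc
      have hdvd : ((orderOf α : ℤ)) ∣ t := orderOf_dvd_iff_zpow_eq_one.mpr this
      rw [hα] at hdvd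
      exact (ZMod.intCast_zmod_eq_zero_iff_dvd t N).mpr hdvd
    have hN1 : ((α ^ t : Kˣ) : K) ^ N = 1 := by
      have : (α ^ t) ^ N = 1 := by
        rw [← zpow_natCast, ← zpow_mul, mul_comm, zpow_mul, zpow_natCast, ← hα,
          pow_orderOf_eq_one, one_zpow]
      calc ((α ^ t : Kˣ) : K) ^ N = (((α ^ t) ^ N : Kˣ) : K) := by
            rw [Units.val_pow_eq_pow_val]
        _ = 1 := by rw [this]; rfl
    rw [geom_sum_eq hne, hN1, sub_self, zero_div, if_neg h]

lemma fcas_eq {K : Type*} [Field K] (α : Kˣ) (j : K) (hj : j ^ 2 = -1) (h2 : (2 : K) ≠ 0)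
    (k i : ℤ) :
    fcas α j k i = (1 - j) / 2 * ((α ^ (i * k) : Kˣ) : K)
      + (1 + j) / 2 * ((α ^ (-(i * k)) : Kˣ) : K) := by
  have hjne : j ≠ 0 := by
    intro h; rw [h] at hj; simp at hj
  have hinv : ((α⁻¹ ^ (i * k) : Kˣ) : K) = ((α ^ (-(i * k)) : Kˣ) : K) := by
    rw [inv_zpow, ← zpow_neg]
  rw [fcas, fcos, fsin, hinv]
  have hj' : j * j = -1 := by rw [← sq]; exact hj
  set a := ((α ^ (i * k) : Kˣ) : K) with ha
  set b := ((α ^ (-(i * k)) : Kˣ) : K) with hb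
  field_simp
  linear_combination (a - b) * hj'

lemma cas_ortho {K : Type*} [Field K] (α : Kˣ) (j : K) (hj : j ^ 2 = -1) (h2 : (2 : K) ≠ 0)
    (N : ℕ) [NeZero N] (hα : orderOf α = N) (m i : ZMod N) :
    ∑ k : ZMod N, fcas α j (k.val : ℤ) (m.val : ℤ) * fcas α j (k.val : ℤ) (i.val : ℤ)
      = if m = i then (N : K) else 0 := by
  have humul : ∀ x y : ℤ, ((α ^ x : Kˣ) : K) * ((α ^ y : Kˣ) : K) = ((α ^ (x + y) : Kˣ) : K) :=
    fun x y => by rw [← Units.val_mul, ← zpow_add]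
  set A : K := (1 - j) / 2 with hA
  set B : K := (1 + j) / 2 with hB
  have key : ∀ k : ZMod N,
      fcas α j (k.val : ℤ) (m.val : ℤ) * fcas α j (k.val : ℤ) (i.val : ℤ)
      = A * A * ((α ^ (((m.val : ℤ) + (i.val : ℤ)) * (k.val : ℤ)) : Kˣ) : K)
      + A * B * ((α ^ (((m.val : ℤ) - (i.val : ℤ)) * (k.val : ℤ)) : Kˣ) : K)
      + A * B * ((α ^ (((i.val : ℤ) - (m.val : ℤ)) * (k.val : ℤ)) : Kˣ) : K)
      + B * B * ((α ^ ((-((m.val : ℤ) + (i.val : ℤ))) * (k.val : ℤ)) : Kˣ) : K) := by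
    intro k
    rw [fcas_eq α j hj h2, fcas_eq α j hj h2]
    rw [add_mul ((m.val : ℤ)) ((i.val : ℤ)) ((k.val : ℤ)),
      sub_mul ((m.val : ℤ)) ((i.val : ℤ)) ((k.val : ℤ)),
      sub_mul ((i.val : ℤ)) ((m.val : ℤ)) ((k.val : ℤ)),
      neg_mul (((m.val : ℤ)) + (i.val : ℤ)) ((k.val : ℤ)),
      add_mul ((m.val : ℤ)) ((i.val : ℤ)) ((k.val : ℤ))]
    simp only [sub_eq_add_neg, neg_add, ← humul]
    ring
  rw [Finset.sum_congr rfl fun k _ => key k]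
  rw [Finset.sum_add_distrib, Finset.sum_add_distrib, Finset.sum_add_distrib,
    ← Finset.mul_sum, ← Finset.mul_sum, ← Finset.mul_sum, ← Finset.mul_sum,
    geom_sum_zmod α N hα, geom_sum_zmod α N hα, geom_sum_zmod α N hα, geom_sum_zmod α N hα]
  have hcast : ∀ a : ZMod N, (((a.val : ℤ) : ZMod N)) = a := by
    intro a
    simp [ZMod.natCast_val, ZMod.cast_id]
  simp only [Int.cast_add, Int.cast_sub, Int.cast_neg, hcast, neg_eq_zero, sub_eq_zero]
  simp only [show (i = m) ↔ (m = i) from eq_comm]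
  set C : K := if m + i = 0 then (N : K) else 0 with hC
  set D : K := if m = i then (N : K) else 0 with hD
  rw [hA, hB]
  field_simp
  linear_combination ((C - D) * 2) * hj

theorem ffht_inversion (p : ℕ) (hp : p.Prime) (hpodd : Odd p)
    (K : Type*) [Field K] [CharP K p] (j : K) (hj : j ^ 2 = -1)
    (α : Kˣ) (N : ℕ) [NeZero N] (hα : orderOf α = N) (hNK : (N : K) ≠ 0)
    (v V : ZMod N → K) (hV : ∀ k, V k = ffht α j v k) (i : ZMod N) :
    v i = (N : K)⁻¹ * ∑ k : ZMod N, V k * fcas α j (k.val : ℤ) (i.val : ℤ) := by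
  have h2 : (2 : K) ≠ 0 := by
    intro h
    have hdvd : p ∣ 2 := by
      have := (CharP.cast_eq_zero_iff K p 2).mp (by exact_mod_cast h)
      exact this
    have hp2 : p = 2 := (Nat.prime_dvd_prime_iff_eq hp Nat.prime_two).mp hdvd
    rw [hp2] at hpodd
    exact (Nat.not_odd_iff_even.mpr (by norm_num)) hpodd
  have step : ∑ k : ZMod N, V k * fcas α j (k.val : ℤ) (i.val : ℤ)
      = ∑ m : ZMod N, v m * ∑ k : ZMod N,
          fcas α j (k.val : ℤ) (m.val : ℤ) * fcas α j (k.val : ℤ) (i.val : ℤ) := by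
    simp only [hV, ffht, Finset.sum_mul, Finset.mul_sum]
    rw [Finset.sum_comm]
    exact Finset.sum_congr rfl fun m _ => Finset.sum_congr rfl fun k _ => by ring
  rw [step]
  have : ∀ m : ZMod N, v m * ∑ k : ZMod N,
      fcas α j (k.val : ℤ) (m.val : ℤ) * fcas α j (k.val : ℤ) (i.val : ℤ)
      = if m = i then v m * (N : K) else 0 := by
    intro m
    rw [cas_ortho α j hj h2 N hα m i]
    by_cases h : m = i <;> simp [h]
  rw [Finset.sum_congr rfl fun m _ => this m, Finset.sum_ite_eq' Finset.univ i]
  simp only [Finset.mem_univ, if_true]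
  field_simp
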